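/- Let ρ ∈ [0,1), κ > 0, N1 ≥ N2 > 0, and D1, D2 ∈ (0,1). The minimum P ≥ 0 for which there exists η ∈ [0,1] satisfying D1 ≥ (1 + η·P/((1−η)·P + N1))^{−κ} and D2 ≥ (1−ρ²)·(1 + (1−η)·P/N2)^{−κ} equals P_outer := N1·(D1^{−1/κ} − 1) + N2·D1^{−1/κ}·max{0, ((1−ρ²)/D2)^{1/κ} − 1}. -/

import Mathlib

private lemma key_iff {κ D y : ℝ} (hκ : 0 < κ) (hD : 0 < D) (hy : 0 < y) :
    y ^ (-κ) ≤ D ↔ D ^ (-1 / κ) ≤ y := by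
  have hEq : (D ^ (-1 / κ)) ^ (-κ) = D := by
    rw [← Real.rpow_mul hD.le]
    have h1 : -1 / κ * -κ = 1 := by field_simp
    rw [h1, Real.rpow_one]
  have hpos : 0 < D ^ (-1 / κ) := Real.rpow_pos_of_pos hD _
  nth_rewrite 1 [← hEq]
  exact Real.rpow_le_rpow_iff_of_neg hy hpos (neg_neg_iff_pos.mpr hκ)

private lemma key_iff2 {κ c D y : ℝ} (hκ : 0 < κ) (hc : 0 < c) (hD : 0 < D) (hy : 0 < y) :
    c * y ^ (-κ) ≤ D ↔ (c / D) ^ (1 / κ) ≤ y := by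
  have h1 : c * y ^ (-κ) ≤ D ↔ y ^ (-κ) ≤ D / c := by
    rw [mul_comm, ← le_div_iff₀ hc]
  have h2 : (D / c) ^ (-1 / κ) = (c / D) ^ (1 / κ) := by
    rw [neg_div, Real.rpow_neg (div_pos hD hc).le, ← Real.inv_rpow (div_pos hD hc).le,
      inv_div]
  rw [h1, key_iff hκ (div_pos hD hc) hy, h2]

/-- For `ρ ∈ [0,1)`, `κ > 0`, `N1 ≥ N2 > 0`, `D1, D2 ∈ (0,1)`, the minimum
`P ≥ 0` for which some `η ∈ [0,1]` satisfies `D1 ≥ (1 + ηP/((1−η)P + N1))^{−κ}` and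
`D2 ≥ (1−ρ²)(1 + (1−η)P/N2)^{−κ}` equals
`N1·(D1^{−1/κ} − 1) + N2·D1^{−1/κ}·max{0, ((1−ρ²)/D2)^{1/κ} − 1}`. -/
theorem outer_bound_minimum_power (ρ κ N1 N2 D1 D2 : ℝ)
    (hρ : ρ ∈ Set.Ico (0 : ℝ) 1) (hκ : 0 < κ) (hN2 : 0 < N2) (hN : N2 ≤ N1)
    (hD1 : D1 ∈ Set.Ioo (0 : ℝ) 1) (hD2 : D2 ∈ Set.Ioo (0 : ℝ) 1) :
    IsLeast {P : ℝ | 0 ≤ P ∧ ∃ η ∈ Set.Icc (0 : ℝ) 1,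
        D1 ≥ (1 + η * P / ((1 - η) * P + N1)) ^ (-κ) ∧
        D2 ≥ (1 - ρ ^ 2) * (1 + (1 - η) * P / N2) ^ (-κ)}
      (N1 * (D1 ^ (-1 / κ) - 1)
        + N2 * D1 ^ (-1 / κ) * max 0 (((1 - ρ ^ 2) / D2) ^ (1 / κ) - 1)) := by
  obtain ⟨hρ0, hρ1⟩ := hρ
  obtain ⟨hD1a, hD1b⟩ := hD1
  obtain ⟨hD2a, hD2b⟩ := hD2
  have hN1 : 0 < N1 := lt_of_lt_of_le hN2 hN
  have hc : 0 < 1 - ρ ^ 2 := by nlinarith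
  set A := D1 ^ (-1 / κ) with hAdef
  set C := ((1 - ρ ^ 2) / D2) ^ (1 / κ) with hCdef
  set B := max 0 (C - 1) with hBdef
  have hA1 : 1 < A := by
    rw [hAdef]
    exact (Real.one_lt_rpow_iff_of_pos hD1a).mpr
      (Or.inr ⟨hD1b, div_neg_of_neg_of_pos (by norm_num) hκ⟩)
  have hAk : A ^ (-κ) = D1 := by
    rw [hAdef, ← Real.rpow_mul hD1a.le]
    have h1 : -1 / κ * -κ = 1 := by field_simp
    rw [h1, Real.rpow_one]
  have hC0 : 0 < C := Real.rpow_pos_of_pos (div_pos hc hD2a) _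
  have hB0 : 0 ≤ B := le_max_left _ _
  have hCB : C ≤ 1 + B := by
    have : C - 1 ≤ B := le_max_right _ _
    linarith
  set Pst := N1 * (A - 1) + N2 * A * B with hPdef
  have hPpos : 0 < Pst := by
    nlinarith [mul_pos hN1 (sub_pos.mpr hA1), mul_nonneg (mul_nonneg hN2.le (by linarith : (0:ℝ) ≤ A)) hB0]
  constructor
  · -- membership
    refine ⟨hPpos.le, 1 - N2 * B / Pst, ⟨?_, ?_⟩, ?_, ?_⟩
    · have h1 : N2 * B ≤ Pst := by nlinarith
      have := div_le_one_of_le₀ h1 hPpos.le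
      linarith
    · have : 0 ≤ N2 * B / Pst := div_nonneg (by positivity) hPpos.le
      linarith
    · -- first constraint
      have h1mηP : (1 - (1 - N2 * B / Pst)) * Pst = N2 * B := by
        field_simp
        ring
      have hηP : (1 - N2 * B / Pst) * Pst = (A - 1) * (N1 + N2 * B) := by
        field_simp
        rw [hPdef]; ring
      have hbase : 1 + (1 - N2 * B / Pst) * Pst / ((1 - (1 - N2 * B / Pst)) * Pst + N1)
          = A := by
        rw [h1mηP, hηP]
        have hd : N2 * B + N1 ≠ 0 := by positivity
        field_simp
        ring
      rw [ge_iff_le, hbase, hAk]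
    · -- second constraint
      have h1mηP : (1 - (1 - N2 * B / Pst)) * Pst = N2 * B := by
        field_simp
        ring
      have hbase : 1 + (1 - (1 - N2 * B / Pst)) * Pst / N2 = 1 + B := by
        rw [h1mηP, mul_div_cancel_left₀ B hN2.ne']
      rw [ge_iff_le, hbase]
      exact (key_iff2 hκ hc hD2a (by linarith)).mpr hCB
  · -- lower bound
    rintro P ⟨hP0, η, ⟨hη0, hη1⟩, h1, h2⟩
    have h1mη : 0 ≤ (1 - η) * P := mul_nonneg (by linarith) hP0
    have hden : 0 < (1 - η) * P + N1 := by linarith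
    have hηP : 0 ≤ η * P := mul_nonneg hη0 hP0
    have hb1 : 0 < 1 + η * P / ((1 - η) * P + N1) := by positivity
    have hb2 : 0 < 1 + (1 - η) * P / N2 := by positivity
    have hc1 : A ≤ 1 + η * P / ((1 - η) * P + N1) :=
      (key_iff hκ hD1a hb1).mp h1
    have hc2 : C ≤ 1 + (1 - η) * P / N2 :=
      (key_iff2 hκ hc hD2a hb2).mp h2
    have hc1' : (A - 1) * ((1 - η) * P + N1) ≤ η * P := by
      have : A - 1 ≤ η * P / ((1 - η) * P + N1) := by linarith
      calc (A - 1) * ((1 - η) * P + N1)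
          ≤ η * P / ((1 - η) * P + N1) * ((1 - η) * P + N1) :=
            mul_le_mul_of_nonneg_right this hden.le
        _ = η * P := div_mul_cancel₀ _ hden.ne'
    have hc2' : N2 * B ≤ (1 - η) * P := by
      have hble : B ≤ (1 - η) * P / N2 :=
        max_le (div_nonneg h1mη hN2.le) (by linarith)
      calc N2 * B ≤ N2 * ((1 - η) * P / N2) :=
            mul_le_mul_of_nonneg_left hble hN2.le
        _ = (1 - η) * P := mul_div_cancel₀ _ hN2.ne'
    have hAB : A * (N2 * B) ≤ A * ((1 - η) * P) :=
      mul_le_mul_of_nonneg_left hc2' (by linarith)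
    nlinarith [hc1', hAB]
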